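/- Let S be a commutative semiring with 0 and 1 and n ≥ 1. Suppose that for every finite set X of variables, the semiring of polynomial functions over S in variables X — the image of the evaluation homomorphism from S[X] to the semiring of functions (X → S) → S with pointwise operations — is locally finite. Then for every finite alphabet Σ, the quotient of the free monoid Σ* by the congruence (u ~ v if and only if the monoid identity u = v holds in UT_n(S)) is a finite monoid; that is, the free objects of finite rank in the monoid variety generated by UT_n(S) are finite. -/

import Mathlib

/-- The submonoid of upper triangular `n × n` matrices over `S`. -/
def UT (n : ℕ) (S : Type*) [CommSemiring S] : Submonoid (Matrix (Fin n) (Fin n) S) where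
  carrier := {A | ∀ i j : Fin n, j < i → A i j = 0}
  one_mem' := fun i j hij => Matrix.one_apply_ne (ne_of_gt hij)
  mul_mem' := by
    intro a b ha hb i j hij
    rw [Matrix.mul_apply]
    apply Finset.sum_eq_zero
    intro k _
    rcases lt_or_ge k i with h | h
    · rw [ha i k h, zero_mul]
    · rw [hb k j (lt_of_lt_of_le hij h), mul_zero]

/-- The congruence on the free monoid `Σ*` identifying `u` and `v` whenever the monoid
identity `u = v` holds in `UT_n(S)`. -/
def idCon (S : Type*) [CommSemiring S] (n : ℕ) (A : Type*) : Con (FreeMonoid A) where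
  r u v := ∀ φ : FreeMonoid A →* (UT n S), φ u = φ v
  iseqv := ⟨fun _ _ => rfl, fun h φ => (h φ).symm, fun h₁ h₂ φ => (h₁ φ).trans (h₂ φ)⟩
  mul' := fun h₁ h₂ φ => by rw [map_mul, map_mul, h₁ φ, h₂ φ]

namespace Stmt15

variable (S : Type*) [CommSemiring S] (n : ℕ) (A : Type*)

/-- Entrywise map of upper triangular matrices along a ring hom. -/
def mapUT {R T : Type*} [CommSemiring R] [CommSemiring T] (f : R →+* T) :
    UT n R →* UT n T where
  toFun M := ⟨(M : Matrix (Fin n) (Fin n) R).map f, fun i j h => by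
    rw [Matrix.map_apply, M.2 i j h, map_zero]⟩
  map_one' := Subtype.ext <| by
    show ((1 : UT n R) : Matrix (Fin n) (Fin n) R).map f = _
    rw [Submonoid.coe_one, Matrix.map_one f (map_zero f) (map_one f)]; rfl
  map_mul' M N := Subtype.ext <| by
    show ((M * N : UT n R) : Matrix (Fin n) (Fin n) R).map f = _
    rw [Submonoid.coe_mul, Matrix.map_mul]; rfl

lemma mapUT_apply {R T : Type*} [CommSemiring R] [CommSemiring T] (f : R →+* T)
    (M : UT n R) (i j : Fin n) :
    ((mapUT n f M : UT n T) : Matrix (Fin n) (Fin n) T) i j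
      = f (((M : UT n R) : Matrix (Fin n) (Fin n) R) i j) := rfl

/-- Variables indexing the entries of generic matrices. -/
abbrev Vars := A × Fin n × Fin n

/-- Evaluation homomorphism from polynomials to functions. -/
noncomputable abbrev evalHom : MvPolynomial (Vars n A) S →+* ((Vars n A → S) → S) :=
  Pi.ringHom (fun ν => MvPolynomial.eval ν)

/-- The semiring of polynomial functions. -/
noncomputable abbrev polyR : Subsemiring ((Vars n A → S) → S) := (evalHom S n A).rangeS

/-- Generator polynomial functions (coordinate functions). -/
noncomputable def gen (p : Vars n A) : polyR S n A :=
  ⟨evalHom S n A (MvPolynomial.X p), ⟨MvPolynomial.X p, rfl⟩⟩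

lemma gen_apply (p : Vars n A) (ν : Vars n A → S) :
    (gen S n A p : (Vars n A → S) → S) ν = ν p := by
  simp [gen]
  exact MvPolynomial.eval_X _

/-- The generic upper triangular matrices. -/
noncomputable def G (a : A) : UT n (polyR S n A) :=
  ⟨Matrix.of fun i j => if j < i then 0 else gen S n A (a, i, j),
    fun i j h => by simp [h]⟩

/-- The canonical homomorphism sending letters to generic matrices. -/
noncomputable def psi : FreeMonoid A →* UT n (polyR S n A) := FreeMonoid.lift (G S n A)

/-- Evaluation at a point `ν`, as a ring hom out of the polynomial functions. -/
noncomputable def evR (ν : Vars n A → S) : polyR S n A →+* S :=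
  (Pi.evalRingHom (fun _ => S) ν).comp (polyR S n A).subtype

lemma evR_apply (ν : Vars n A → S) (f : polyR S n A) :
    evR S n A ν f = (f : (Vars n A → S) → S) ν := rfl

/-- Every homomorphism to `UT n S` factors through the generic one. -/
lemma factor (φ : FreeMonoid A →* UT n S) :
    ∃ ν : Vars n A → S, φ = (mapUT n (evR S n A ν)).comp (psi S n A) := by
  refine ⟨fun p => ((φ (FreeMonoid.of p.1) : UT n S) : Matrix (Fin n) (Fin n) S) p.2.1 p.2.2, ?_⟩
  refine FreeMonoid.hom_eq fun a => ?_
  refine Subtype.ext ?_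
  ext i j
  show _ = ((mapUT n (evR S n A _) (G S n A a) : UT n S) : Matrix (Fin n) (Fin n) S) i j
  rw [mapUT_apply]
  rcases lt_or_ge j i with h | h
  · rw [(φ (FreeMonoid.of a)).2 i j h]
    show (0 : S) = evR S n A _ (((G S n A a : UT n (polyR S n A)) :
      Matrix (Fin n) (Fin n) (polyR S n A)) i j)
    simp [G, h]
  · have : ((G S n A a : UT n (polyR S n A)) :
        Matrix (Fin n) (Fin n) (polyR S n A)) i j = gen S n A (a, i, j) := by
      simp [G, not_lt.mpr h]
    rw [this, evR_apply, gen_apply]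

lemma psi_eq_of_forall_eval {u v : FreeMonoid A}
    (h : ∀ ν : Vars n A → S, mapUT n (evR S n A ν) (psi S n A u)
      = mapUT n (evR S n A ν) (psi S n A v)) : psi S n A u = psi S n A v := by
  refine Subtype.ext (Matrix.ext fun i j => Subtype.ext (funext fun ν => ?_))
  have := congrArg (fun M : UT n S => ((M : Matrix (Fin n) (Fin n) S)) i j) (h ν)
  simpa [mapUT_apply, evR_apply] using this

/-- The key characterization: the identity congruence is the kernel of `psi`. -/
lemma idCon_iff (u v : FreeMonoid A) :
    (idCon S n A) u v ↔ psi S n A u = psi S n A v := by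
  constructor
  · intro h
    refine psi_eq_of_forall_eval S n A fun ν => ?_
    exact h ((mapUT n (evR S n A ν)).comp (psi S n A))
  · intro h φ
    obtain ⟨ν, rfl⟩ := factor S n A φ
    simp [MonoidHom.comp_apply, h]

/-- All entries of generic products lie in the subsemiring generated by the generators. -/
lemma entries_mem (w : FreeMonoid A) (i j : Fin n) :
    ((psi S n A w : UT n (polyR S n A)) : Matrix (Fin n) (Fin n) (polyR S n A)) i j
      ∈ Subsemiring.closure (Set.range (gen S n A)) := by
  induction w using FreeMonoid.inductionOn' generalizing i j with
  | one =>
    rw [MonoidHom.map_one]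
    rcases eq_or_ne i j with rfl | hne
    · rw [Submonoid.coe_one, Matrix.one_apply_eq]; exact one_mem _
    · rw [Submonoid.coe_one, Matrix.one_apply_ne hne]; exact zero_mem _
  | of_mul a w ih =>
    rw [MonoidHom.map_mul]
    rw [Submonoid.coe_mul, Matrix.mul_apply]
    refine Subsemiring.sum_mem _ fun k _ => mul_mem ?_ (ih k j)
    rcases lt_or_ge k i with h | h
    · have : ((psi S n A (FreeMonoid.of a) : UT n (polyR S n A)) :
          Matrix (Fin n) (Fin n) (polyR S n A)) i k = 0 := by
        simp [psi, G, h]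
      rw [this]; exact zero_mem _
    · have : ((psi S n A (FreeMonoid.of a) : UT n (polyR S n A)) :
          Matrix (Fin n) (Fin n) (polyR S n A)) i k = gen S n A (a, i, k) := by
        simp [psi, G, not_lt.mpr h]
      rw [this]
      exact Subsemiring.subset_closure ⟨_, rfl⟩

end Stmt15

/-- **Statement 15.** If for every finite variable set `X` the semiring of polynomial
functions over `S` (the image of `S[X]` in the semiring of functions `(X → S) → S`) is
locally finite, then for every finite alphabet the free object in the monoid variety
generated by `UT_n(S)` — the quotient of the free monoid by the identities of `UT_n(S)` —
is finite. -/
theorem free_objects_finite_of_locally_finite_polyfun {S : Type*} [CommSemiring S]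
    [Nontrivial S] (n : ℕ) (hn : 1 ≤ n)
    (hS : ∀ (X : Type) [Fintype X],
      ∀ T : Finset ↥(Pi.ringHom (fun ν : X → S => MvPolynomial.eval ν)).rangeS,
        ((Subsemiring.closure (T : Set ↥(Pi.ringHom
            (fun ν : X → S => MvPolynomial.eval ν)).rangeS)) :
          Set ↥(Pi.ringHom (fun ν : X → S => MvPolynomial.eval ν)).rangeS).Finite) :
    ∀ (A : Type) [Fintype A], Finite ((idCon S n A).Quotient) := by
  intro A _
  classical
  set X : Type := Stmt15.Vars n A with hX
  let T : Finset ↥(Stmt15.polyR S n A) := Finset.image (Stmt15.gen S n A) Finset.univ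
  have hTset : (T : Set ↥(Stmt15.polyR S n A)) = Set.range (Stmt15.gen S n A) := by
    simp [T]
  have hC : ((Subsemiring.closure (Set.range (Stmt15.gen S n A))) :
      Set ↥(Stmt15.polyR S n A)).Finite := by
    rw [← hTset]
    exact hS X T
  set C : Set ↥(Stmt15.polyR S n A) :=
    ((Subsemiring.closure (Set.range (Stmt15.gen S n A))) : Set ↥(Stmt15.polyR S n A))
    with hCdef
  have : Finite C := hC.to_subtype
  let F : (idCon S n A).Quotient → (Fin n → Fin n → C) := fun q =>
    Con.liftOn q
      (fun w i j => (⟨((Stmt15.psi S n A w : UT n (Stmt15.polyR S n A)) :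
        Matrix (Fin n) (Fin n) (Stmt15.polyR S n A)) i j,
        Stmt15.entries_mem S n A w i j⟩ : C))
      (by
        intro u v huv
        have h := (Stmt15.idCon_iff S n A u v).mp huv
        funext i j
        exact Subtype.ext (congrArg (fun M : UT n (Stmt15.polyR S n A) =>
          ((M : Matrix (Fin n) (Fin n) (Stmt15.polyR S n A)) i j)) h))
  have hF : Function.Injective F := by
    intro q₁ q₂ h
    induction q₁ using Con.induction_on with | H u =>
    induction q₂ using Con.induction_on with | H v =>
    refine (Con.eq _).mpr ((Stmt15.idCon_iff S n A u v).mpr ?_)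
    refine Subtype.ext (Matrix.ext fun i j => ?_)
    exact congrArg Subtype.val (congrFun (congrFun h i) j)
  exact Finite.of_injective F hF
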